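/- For 0 ≤ r < 1, the integral over θ ∈ [0, 2π] of (log|1 - r e^{iθ}|)² dθ equals π · Li₂(r²). -/

import Mathlib

open Real Complex
open MeasureTheory intervalIntegral

set_option maxHeartbeats 1000000

lemma aux_integral_cos_int (k : ℤ) (hk : k ≠ 0) :
    ∫ θ in (0:ℝ)..(2*π), Real.cos (k * θ) = 0 := by
  have hk' : (k:ℝ) ≠ 0 := Int.cast_ne_zero.mpr hk
  rw [intervalIntegral.integral_comp_mul_left (fun x => Real.cos x) hk']
  simp only [mul_zero, integral_cos, Real.sin_zero, sub_zero]
  rw [show (k:ℝ) * (2*π) = (2*k : ℤ) * π by push_cast; ring, Real.sin_int_mul_pi]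
  simp

lemma aux_orth (n m : ℕ) (hn : n ≠ 0) (hm : m ≠ 0) :
    ∫ θ in (0:ℝ)..(2*π), Real.cos (n*θ) * Real.cos (m*θ)
      = if n = m then π else 0 := by
  have key : ∀ θ : ℝ, Real.cos (n*θ) * Real.cos (m*θ)
      = (Real.cos (((n+m : ℤ)) * θ) + Real.cos (((n - m : ℤ)) * θ)) / 2 := by
    intro θ
    rw [show ((n+m : ℤ):ℝ) * θ = n*θ + m*θ by push_cast; ring,
      show ((n-m : ℤ):ℝ) * θ = n*θ - m*θ by push_cast; ring,
      Real.cos_add, Real.cos_sub]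
    ring
  simp_rw [key]
  have h1 : IntervalIntegrable (fun θ => Real.cos (((n+m : ℤ)) * θ)) volume 0 (2*π) :=
    (Real.continuous_cos.comp (continuous_const.mul continuous_id)).intervalIntegrable _ _
  have h2 : IntervalIntegrable (fun θ => Real.cos (((n-m : ℤ)) * θ)) volume 0 (2*π) :=
    (Real.continuous_cos.comp (continuous_const.mul continuous_id)).intervalIntegrable _ _
  rw [intervalIntegral.integral_div, intervalIntegral.integral_add h1 h2,
    aux_integral_cos_int (n+m : ℤ) (by positivity)]
  by_cases h : n = m
  · subst h
    simp only [sub_self, Int.cast_zero, zero_mul, Real.cos_zero,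
      intervalIntegral.integral_const, smul_eq_mul,
      mul_one, zero_add, if_pos rfl, sub_zero, if_true]
    ring
  · rw [aux_integral_cos_int _ (by omega)]
    simp [h]

lemma aux_hasSum (r θ : ℝ) (hr0 : 0 ≤ r) (hr1 : r < 1) :
    HasSum (fun n : ℕ => -(r^n * Real.cos (n*θ) / n))
      (Real.log ‖1 - (r:ℂ) * Complex.exp (θ * Complex.I)‖) := by
  have hz : ‖(r:ℂ) * Complex.exp (θ * Complex.I)‖ < 1 := by
    rw [norm_mul, Complex.norm_exp_ofReal_mul_I, Complex.norm_real]
    simpa [_root_.abs_of_nonneg hr0] using hr1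
  have h := ((Complex.hasSum_taylorSeries_neg_log hz).mapL Complex.reCLM).neg
  have hterm : ∀ n : ℕ, -(Complex.reCLM (((r:ℂ) * Complex.exp (θ * Complex.I)) ^ n / n))
      = -(r^n * Real.cos (n*θ) / n) := by
    intro n
    simp only [Complex.reCLM_apply]
    congr 1
    rw [mul_pow, ← Complex.exp_nat_mul, ← mul_assoc,
      show (n:ℂ) * (θ:ℝ) = ((n * θ : ℝ) : ℂ) by push_cast; ring,
      ← Complex.ofReal_pow, Complex.div_natCast_re, Complex.re_ofReal_mul,
      Complex.exp_ofReal_mul_I_re]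
  have htgt : -(Complex.reCLM (-(Complex.log (1 - (r:ℂ) * Complex.exp (θ * Complex.I)))))
      = Real.log ‖1 - (r:ℂ) * Complex.exp (θ * Complex.I)‖ := by
    simp [Complex.log_re]
  rw [← htgt]
  exact HasSum.congr_fun h fun n => (hterm n).symm

theorem integral_sq_log_abs_one_sub_circle (r : ℝ) (hr0 : 0 ≤ r) (hr1 : r < 1) :
    ∫ θ in (0:ℝ)..(2 * π),
        (Real.log ‖1 - (r : ℂ) * Complex.exp (θ * Complex.I)‖) ^ 2
      = π * ∑' n : ℕ, (r ^ 2) ^ (n + 1) / ((n : ℝ) + 1) ^ 2 := by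
  set f : ℕ → ℝ → ℝ := fun n θ => -(r^n * Real.cos (n*θ) / n) with hf_def
  set F : ℕ × ℕ → ℝ → ℝ := fun p θ => f p.1 θ * f p.2 θ with hF_def
  have h2π : (0:ℝ) ≤ 2 * π := by positivity
  have fbound : ∀ (n : ℕ) (θ : ℝ), |f n θ| ≤ r ^ n := by
    intro n θ
    rcases n with _ | n
    · simp [hf_def]
    · have h1 : |f (n+1) θ| = r^(n+1) * |Real.cos ((n+1)*θ)| / (n+1) := by
        rw [hf_def]
        simp only [abs_neg, abs_div, abs_mul, _root_.abs_of_nonneg (pow_nonneg hr0 _), Nat.abs_cast]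
        push_cast
        ring
      rw [h1]
      calc r^(n+1) * |Real.cos ((n+1)*θ)| / (n+1)
          ≤ r^(n+1) * 1 / (n+1) := by
            gcongr
            exact Real.abs_cos_le_one _
        _ ≤ r^(n+1) := by
            rw [mul_one]
            apply div_le_self (pow_nonneg hr0 _)
            exact_mod_cast Nat.one_le_iff_ne_zero.mpr (Nat.succ_ne_zero n)
  have hgeo : Summable (fun p : ℕ × ℕ => r ^ p.1 * r ^ p.2) :=
    (summable_geometric_of_lt_one hr0 hr1).mul_of_nonneg
      (summable_geometric_of_lt_one hr0 hr1)
      (fun n => pow_nonneg hr0 n) (fun n => pow_nonneg hr0 n)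
  have hFsummable : ∀ θ : ℝ, Summable (fun p : ℕ × ℕ => F p θ) := by
    intro θ
    apply Summable.of_norm_bounded hgeo
    intro p
    rw [hF_def]
    simp only [Real.norm_eq_abs, abs_mul]
    exact mul_le_mul (fbound _ _) (fbound _ _) (abs_nonneg _) (pow_nonneg hr0 _)
  have hFs : ∀ θ : ℝ, HasSum (fun p : ℕ × ℕ => F p θ)
      ((Real.log ‖1 - (r : ℂ) * Complex.exp (θ * Complex.I)‖) ^ 2) := by
    intro θ
    rw [sq]
    exact (aux_hasSum r θ hr0 hr1).mul (aux_hasSum r θ hr0 hr1) (hFsummable θ)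
  -- continuity / integrability
  have hFcont : ∀ p : ℕ × ℕ, Continuous (F p) := by
    intro p
    apply Continuous.mul <;>
    exact ((continuous_const.mul (Real.continuous_cos.comp
      (continuous_const.mul continuous_id))).div_const _).neg
  have hint : ∀ p : ℕ × ℕ, Integrable (F p) (volume.restrict (Set.Ioc 0 (2*π))) :=
    fun p => (hFcont p).integrableOn_Ioc
  have hnorm : Summable fun p : ℕ × ℕ => ∫ θ in Set.Ioc 0 (2*π), ‖F p θ‖ := by
    apply Summable.of_nonneg_of_le
      (fun p => integral_nonneg fun θ => norm_nonneg _)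
      (fun p => ?_) (hgeo.mul_left (2*π))
    calc ∫ θ in Set.Ioc 0 (2*π), ‖F p θ‖
        ≤ ∫ _θ in Set.Ioc 0 (2*π), r ^ p.1 * r ^ p.2 := by
          apply setIntegral_mono_on (hint p).norm
            (integrableOn_const measure_Ioc_lt_top.ne) measurableSet_Ioc
          intro θ _
          rw [Real.norm_eq_abs, hF_def]
          simp only [abs_mul]
          exact mul_le_mul (fbound _ _) (fbound _ _) (abs_nonneg _) (pow_nonneg hr0 _)
      _ = 2 * π * (r ^ p.1 * r ^ p.2) := by
          rw [setIntegral_const, measureReal_def, Real.volume_Ioc, smul_eq_mul, sub_zero,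
            ENNReal.toReal_ofReal h2π]
  -- swap integral and sum
  have step1 : ∫ θ in (0:ℝ)..(2 * π),
      (Real.log ‖1 - (r : ℂ) * Complex.exp (θ * Complex.I)‖) ^ 2
      = ∑' p : ℕ × ℕ, ∫ θ in Set.Ioc 0 (2*π), F p θ := by
    rw [intervalIntegral.integral_of_le h2π]
    rw [MeasureTheory.integral_tsum_of_summable_integral_norm hint hnorm]
    apply setIntegral_congr_fun measurableSet_Ioc
    intro θ _
    exact ((hFs θ).tsum_eq).symm
  rw [step1]
  -- compute each integral
  set D : ℕ × ℕ → ℝ := fun p => if p.1 = p.2 then π * (r^2)^p.1 / (p.1:ℝ)^2 else 0 with hD_def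
  have hD : ∀ p : ℕ × ℕ, (∫ θ in Set.Ioc 0 (2*π), F p θ) = D p := by
    rintro ⟨n, m⟩
    rw [← intervalIntegral.integral_of_le h2π]
    rcases eq_or_ne n 0 with rfl | hn
    · have : ∀ θ : ℝ, F (0, m) θ = 0 := by
        intro θ; simp [hF_def, hf_def]
      simp_rw [this]
      rw [intervalIntegral.integral_zero, hD_def]
      rcases eq_or_ne (0 : ℕ) m with rfl | h
      · simp
      · simp [h]
    rcases eq_or_ne m 0 with rfl | hm
    · have : ∀ θ : ℝ, F (n, 0) θ = 0 := by
        intro θ; simp [hF_def, hf_def]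
      simp_rw [this]
      rw [intervalIntegral.integral_zero, hD_def]
      simp [hn]
    · have key : ∀ θ : ℝ, F (n, m) θ
          = (r^n * r^m / (n * m)) * (Real.cos (n*θ) * Real.cos (m*θ)) := by
        intro θ; rw [hF_def, hf_def]; ring
      simp_rw [key]
      rw [intervalIntegral.integral_const_mul, aux_orth n m hn hm, hD_def]
      rcases eq_or_ne n m with rfl | h
      · simp only [if_pos rfl, ↓reduceIte]
        have : ((n:ℝ)) ≠ 0 := Nat.cast_ne_zero.mpr hn
        field_simp
        ring
      · simp [h]
  simp_rw [hD]
  -- collapse the double sum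
  have hDsummable : Summable D := by
    apply Summable.of_nonneg_of_le (fun p => ?_) (fun p => ?_) (hgeo.mul_left π)
    · rw [hD_def]
      rcases eq_or_ne p.1 p.2 with h | h
      · simp only [if_pos h]; positivity
      · simp [h]
    · rw [hD_def]
      rcases eq_or_ne p.1 p.2 with h | h
      · simp only [if_pos h]
        rcases eq_or_ne p.1 0 with h0 | h0
        · simp [h0]
          try positivity
        · rw [mul_div_assoc]
          have h1 : (1:ℝ) ≤ (p.1:ℝ)^2 := by
            have : (1:ℕ) ≤ p.1 := Nat.one_le_iff_ne_zero.mpr h0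
            exact_mod_cast Nat.one_le_iff_ne_zero.mpr (by positivity)
          calc π * ((r^2)^p.1 / (p.1:ℝ)^2)
              ≤ π * ((r^2)^p.1 / 1) := by
                gcongr
            _ = π * (r^p.1 * r^p.2) := by
                rw [div_one, ← h, ← pow_mul, mul_comm 2 p.1, pow_mul]
                ring_nf
      · simp only [if_neg h]
        positivity
  have hslice : ∀ n : ℕ, Summable fun m : ℕ => D (n, m) := by
    intro n
    apply summable_of_ne_finset_zero (s := {n})
    intro m hm
    simp only [Finset.mem_singleton] at hm
    rw [hD_def]
    exact if_neg (fun e => hm e.symm)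
  rw [Summable.tsum_prod' hDsummable hslice]
  have hinner : ∀ n : ℕ, ∑' m : ℕ, D (n, m) = π * (r^2)^n / (n:ℝ)^2 := by
    intro n
    rw [tsum_eq_single n (fun m hm => by rw [hD_def]; exact if_neg (fun e => hm e.symm))]
    rw [hD_def]
    simp
  simp_rw [hinner]
  -- reindex
  have hr2 : r^2 < 1 := by nlinarith
  have hsum : Summable (fun n : ℕ => π * (r^2)^n / (n:ℝ)^2) := by
    apply Summable.of_nonneg_of_le (fun n => by positivity) (fun n => ?_)
      ((summable_geometric_of_lt_one (by positivity) hr2).mul_left π)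
    rcases eq_or_ne n 0 with rfl | h0
    · simp
      positivity
    · rw [mul_div_assoc]
      gcongr
      apply div_le_self (by positivity)
      have : (1:ℕ) ≤ n := Nat.one_le_iff_ne_zero.mpr h0
      have : (1:ℝ) ≤ (n:ℝ) := by exact_mod_cast this
      nlinarith
  rw [Summable.tsum_eq_zero_add hsum]
  simp only [pow_zero, Nat.cast_zero, ne_eq, OfNat.ofNat_ne_zero, not_false_eq_true,
    zero_pow, div_zero, zero_add, mul_one]
  rw [← tsum_mul_left]
  congr 1
  ext n
  push_cast
  ring
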